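/- Let s ∈ (0,1] and R > 0, and let f : ℝ → ℝ be supported in [0,1], square integrable, and satisfy |f(x) − f(y)| ≤ R·|x−y|^s for all x,y ∈ [0,1]. Then for every D ∈ ℕ*, ‖f − Π_{S_{(1,D)}}(f)‖_2² ≤ R²·D^{−2s}, where Π_{S_{(1,D)}} is the orthogonal projection in L²(ℝ) onto S_{(1,D)}. -/

import Mathlib

open MeasureTheory Set

noncomputable def haarFn (D : ℕ) (k : ℤ) (x : ℝ) : ℝ :=
  Real.sqrt D * Set.indicator (Set.Ico ((k : ℝ) / D) (((k : ℝ) + 1) / D)) (fun _ => (1 : ℝ)) x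

noncomputable def projHaar (D : ℕ) (f : ℝ → ℝ) (x : ℝ) : ℝ :=
  ∑' k : ℤ, (∫ y, haarFn D k y * f y) * haarFn D k x

noncomputable def residHaar (D : ℕ) (f : ℝ → ℝ) : ℝ :=
  ∫ x, (f x - projHaar D f x) ^ 2

/-- A Hölder function of order `s ∈ (0,1]` supported in `[0,1]` satisfies
`‖f - Π_{S_{(1,D)}}(f)‖₂² ≤ R² D^{-2s}` for every `D ≥ 1`. -/
theorem statement12 (s R : ℝ) (hs : s ∈ Set.Ioc (0 : ℝ) 1) (hR : 0 < R)
    (f : ℝ → ℝ) (hmeas : Measurable f)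
    (hsupp : ∀ x, x ∉ Set.Icc (0 : ℝ) 1 → f x = 0)
    (hL2 : Integrable (fun x => f x ^ 2))
    (hHolder : ∀ x ∈ Set.Icc (0 : ℝ) 1, ∀ y ∈ Set.Icc (0 : ℝ) 1,
      |f x - f y| ≤ R * |x - y| ^ s)
    (D : ℕ) (hD : 1 ≤ D) :
    residHaar D f ≤ R ^ 2 * (D : ℝ) ^ (-(2 * s)) := by
  have hDr : (0:ℝ) < D := by exact_mod_cast hD
  set I : ℤ → Set ℝ := fun k => Set.Ico ((k : ℝ) / D) (((k : ℝ) + 1) / D) with hI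
  -- membership characterization
  have hmem : ∀ (k : ℤ) (x : ℝ), x ∈ I k ↔ ⌊(D : ℝ) * x⌋ = k := by
    intro k x
    rw [hI]
    rw [Int.floor_eq_iff, Set.mem_Ico, div_le_iff₀ hDr, lt_div_iff₀ hDr]
    constructor <;> rintro ⟨h1, h2⟩ <;> constructor <;> nlinarith [mul_comm x (D:ℝ)]
  have hvol : ∀ k : ℤ, volume (I k) = ENNReal.ofReal (1 / D) := by
    intro k
    rw [hI]
    simp only [Real.volume_Ico]
    congr 1
    field_simp
    ring
  have hvolr : ∀ k : ℤ, (volume (I k)).toReal = 1 / D := by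
    intro k
    rw [hvol k, ENNReal.toReal_ofReal (by positivity)]
  -- boundedness of f
  set M : ℝ := |f 0| + R with hM
  have hbd : ∀ x, |f x| ≤ M := by
    intro x
    by_cases hx : x ∈ Set.Icc (0:ℝ) 1
    · have h0 : (0:ℝ) ∈ Set.Icc (0:ℝ) 1 := by norm_num
      have h1 := hHolder x hx 0 h0
      have habs : |x - 0| ^ s ≤ 1 := by
        rw [sub_zero]
        apply Real.rpow_le_one (abs_nonneg x) _ (le_of_lt hs.1)
        rw [abs_le]; exact ⟨by linarith [hx.1], hx.2⟩
      have h2 : |f x| - |f 0| ≤ |f x - f 0| := abs_sub_abs_le_abs_sub (f x) (f 0)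
      nlinarith
    · rw [hsupp x hx, abs_zero, hM]; positivity
  -- integrability on I k
  have hint : ∀ k : ℤ, IntegrableOn f (I k) := by
    intro k
    apply Integrable.mono' (g := fun _ => M) _ (hmeas.aestronglyMeasurable.restrict)
    · exact Filter.Eventually.of_forall fun x => by simpa using hbd x
    · refine (integrableOn_const_iff).mpr (Or.inr ?_)
      rw [hvol k]; exact ENNReal.ofReal_lt_top
  -- projection formula
  have hproj : ∀ x : ℝ, projHaar D f x = (D:ℝ) * ∫ y in I ⌊(D:ℝ)*x⌋, f y := by
    intro x
    rw [projHaar]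
    rw [tsum_eq_single ⌊(D:ℝ)*x⌋]
    · have hx : x ∈ I ⌊(D:ℝ)*x⌋ := (hmem _ _).mpr rfl
      have h1 : haarFn D ⌊(D:ℝ)*x⌋ x = Real.sqrt D := by
        rw [haarFn, Set.indicator_of_mem hx, mul_one]
      have h2 : (∫ y, haarFn D ⌊(D:ℝ)*x⌋ y * f y) = Real.sqrt D * ∫ y in I ⌊(D:ℝ)*x⌋, f y := by
        have heq : ∀ y, haarFn D ⌊(D:ℝ)*x⌋ y * f y
            = Set.indicator (I ⌊(D:ℝ)*x⌋) (fun y => Real.sqrt D * f y) y := by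
          intro y
          rw [haarFn]
          by_cases hy : y ∈ I ⌊(D:ℝ)*x⌋
          · rw [Set.indicator_of_mem hy, Set.indicator_of_mem hy, mul_one]
          · rw [Set.indicator_of_notMem hy, Set.indicator_of_notMem hy, mul_zero, zero_mul]
        rw [funext heq, integral_indicator measurableSet_Ico, integral_const_mul]
      rw [h1, h2, mul_assoc, mul_comm, mul_assoc, Real.mul_self_sqrt (by positivity)]
      ring
    · intro k hk
      have : x ∉ I k := fun h => hk ((hmem _ _).mp h).symm
      rw [haarFn, Set.indicator_of_notMem this, mul_zero, mul_zero]
  -- key pointwise bound on [0,1)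
  set C : ℝ := R * (D:ℝ) ^ (-s) with hC
  have hCpos : 0 ≤ C := mul_nonneg (le_of_lt hR) (Real.rpow_nonneg (le_of_lt hDr) _)
  have hinvD : ((1:ℝ)/D) ^ s = (D:ℝ) ^ (-s) := by
    rw [Real.rpow_neg (le_of_lt hDr), one_div, Real.inv_rpow (le_of_lt hDr)]
  have hkey : ∀ x ∈ Set.Ico (0:ℝ) 1, |f x - projHaar D f x| ≤ C := by
    intro x hx
    set k : ℤ := ⌊(D:ℝ)*x⌋ with hk
    have hxI : x ∈ I k := (hmem _ _).mpr rfl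
    have hk0 : 0 ≤ k := Int.floor_nonneg.mpr (by nlinarith [hx.1])
    have hkD : k + 1 ≤ (D:ℤ) := by
      have h1 : ((D:ℝ)*x) < ((D:ℤ):ℝ) := by push_cast; nlinarith [hx.2]
      have := Int.floor_lt.mpr h1
      omega
    have hkDr : ((k:ℝ) + 1) / D ≤ 1 := by
      rw [div_le_one hDr]
      have : ((k:ℝ) + 1) ≤ (D:ℝ) := by exact_mod_cast hkD
      linarith
    have hIsub : I k ⊆ Set.Icc (0:ℝ) 1 := by
      intro y hy
      simp only [hI, Set.mem_Ico] at hy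
      refine ⟨le_trans (by positivity) hy.1, le_of_lt (lt_of_lt_of_le hy.2 hkDr)⟩
    have hx1 : x ∈ Set.Icc (0:ℝ) 1 := ⟨hx.1, le_of_lt hx.2⟩
    have hconst : ∀ c : ℝ, IntegrableOn (fun _ : ℝ => c) (I k) := by
      intro c
      refine (integrableOn_const_iff).mpr (Or.inr ?_)
      rw [hvol k]; exact ENNReal.ofReal_lt_top
    have hdiff : (∫ y in I k, (f x - f y)) = (1/(D:ℝ)) * f x - ∫ y in I k, f y := by
      rw [integral_sub (hconst (f x)) (hint k), setIntegral_const, measureReal_def, hvolr k, smul_eq_mul]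
    have hrepr : f x - projHaar D f x = (D:ℝ) * ∫ y in I k, (f x - f y) := by
      rw [hproj x, ← hk, hdiff]
      field_simp
    rw [hrepr, abs_mul, abs_of_pos hDr]
    -- bound the integral
    have hbnd : |∫ y in I k, (f x - f y)| ≤ (1/(D:ℝ)) * (R * (1/(D:ℝ)) ^ s) := by
      have h1 : |∫ y in I k, (f x - f y)| ≤ ∫ y in I k, |f x - f y| := by
        simpa using norm_integral_le_integral_norm (μ := volume.restrict (I k)) (fun y => f x - f y)
      have h2 : (∫ y in I k, |f x - f y|) ≤ ∫ y in I k, (R * (1/(D:ℝ)) ^ s) := by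
        apply setIntegral_mono_on ((hconst (f x)).sub (hint k)).abs (hconst _) measurableSet_Ico
        intro y hy
        have hy1 : y ∈ Set.Icc (0:ℝ) 1 := hIsub hy
        have hxy : |x - y| ≤ 1/(D:ℝ) := by
          simp only [hI, Set.mem_Ico] at hxI hy
          have hlen : ((k:ℝ) + 1)/D = (k:ℝ)/D + 1/D := by ring
          rw [abs_sub_le_iff]
          constructor <;> nlinarith [hxI.1, hxI.2, hy.1, hy.2]
        calc |f x - f y| ≤ R * |x - y| ^ s := hHolder x hx1 y hy1
          _ ≤ R * (1/(D:ℝ)) ^ s := by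
              apply mul_le_mul_of_nonneg_left _ (le_of_lt hR)
              exact Real.rpow_le_rpow (abs_nonneg _) hxy (le_of_lt hs.1)
      have h3 : (∫ y in I k, (R * (1/(D:ℝ)) ^ s) : ℝ) = (1/(D:ℝ)) * (R * (1/(D:ℝ)) ^ s) := by
        rw [setIntegral_const, measureReal_def, hvolr k, smul_eq_mul]
      linarith
    calc (D:ℝ) * |∫ y in I k, (f x - f y)| ≤ (D:ℝ) * ((1/(D:ℝ)) * (R * (1/(D:ℝ)) ^ s)) :=
          mul_le_mul_of_nonneg_left hbnd (le_of_lt hDr)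
      _ = C := by rw [hC, ← hinvD]; field_simp
  -- integral over I k of f vanishes for k outside [0, D)
  have hIzero : ∀ k : ℤ, (k < 0 ∨ (D:ℤ) ≤ k) → (∫ y in I k, f y) = 0 := by
    intro k hk
    have hind : Set.indicator (Set.Icc (0:ℝ) 1) f = f := by
      funext y
      by_cases hy : y ∈ Set.Icc (0:ℝ) 1
      · rw [Set.indicator_of_mem hy]
      · rw [Set.indicator_of_notMem hy, hsupp y hy]
    have : (∫ y in I k, f y) = ∫ y in I k ∩ Set.Icc (0:ℝ) 1, f y := by
      conv_lhs => rw [← hind]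
      rw [setIntegral_indicator measurableSet_Icc]
    rw [this]
    apply setIntegral_measure_zero
    rcases hk with hk | hk
    · have : I k ∩ Set.Icc (0:ℝ) 1 = ∅ := by
        apply Set.eq_empty_of_forall_notMem
        rintro y ⟨hy1, hy2⟩
        simp only [hI, Set.mem_Ico] at hy1
        have hkr : ((k:ℝ) + 1) ≤ 0 := by
          have : (k:ℝ) ≤ -1 := by exact_mod_cast Int.le_sub_one_of_lt hk
          linarith
        have : ((k:ℝ) + 1)/D ≤ 0 := div_nonpos_of_nonpos_of_nonneg hkr (le_of_lt hDr)
        have := hy2.1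
        linarith [hy1.2]
      rw [this]; simp
    · refine measure_mono_null ?_ (Real.volume_singleton (a := (1:ℝ)))
      rintro y ⟨hy1, hy2⟩
      simp only [hI, Set.mem_Ico] at hy1
      have hkr : (1:ℝ) ≤ (k:ℝ)/D := by
        rw [le_div_iff₀ hDr]
        have : (D:ℝ) ≤ (k:ℝ) := by exact_mod_cast hk
        linarith
      have h1 : (1:ℝ) ≤ y := le_trans hkr hy1.1
      have h2 : y ≤ 1 := hy2.2
      simp [le_antisymm h2 h1]
  -- residual vanishes outside [0,1) except possibly at 1
  have hzero : ∀ x : ℝ, x ∉ Set.Ico (0:ℝ) 1 → x ≠ 1 → f x - projHaar D f x = 0 := by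
    intro x hx hx1
    have hxIcc : x ∉ Set.Icc (0:ℝ) 1 := by
      simp only [Set.mem_Ico, not_and_or, not_le, not_lt] at hx
      simp only [Set.mem_Icc, not_and_or, not_le]
      rcases hx with h | h
      · exact Or.inl h
      · exact Or.inr (lt_of_le_of_ne h (Ne.symm hx1))
    rw [hsupp x hxIcc, hproj x]
    rw [hIzero ⌊(D:ℝ)*x⌋ _, mul_zero, sub_zero]
    simp only [Set.mem_Icc, not_and_or, not_le] at hxIcc
    rcases hxIcc with h | h
    · left
      apply Int.floor_lt.mpr
      push_cast
      nlinarith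
    · right
      apply Int.le_floor.mpr
      push_cast
      nlinarith
  -- conclude
  have hres : residHaar D f = ∫ x in Set.Ico (0:ℝ) 1, (f x - projHaar D f x) ^ 2 := by
    rw [residHaar, ← integral_indicator measurableSet_Ico]
    apply integral_congr_ae
    have hsub : {x : ℝ | ¬ ((f x - projHaar D f x) ^ 2 =
        Set.indicator (Set.Ico (0:ℝ) 1) (fun x => (f x - projHaar D f x) ^ 2) x)} ⊆ {1} := by
      intro x hx
      simp only [Set.mem_setOf_eq] at hx
      by_contra hne
      apply hx
      by_cases hxm : x ∈ Set.Ico (0:ℝ) 1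
      · rw [Set.indicator_of_mem hxm]
      · rw [Set.indicator_of_notMem hxm, hzero x hxm (by simpa using hne)]
        ring
    exact ae_iff.mpr (measure_mono_null hsub Real.volume_singleton)
  rw [hres]
  have hb : ∀ x ∈ Set.Ico (0:ℝ) 1, ‖(f x - projHaar D f x) ^ 2‖ ≤ C ^ 2 := by
    intro x hx
    rw [Real.norm_eq_abs, abs_pow]
    exact pow_le_pow_left₀ (abs_nonneg _) (hkey x hx) 2
  have := norm_setIntegral_le_of_norm_le_const (μ := volume) (s := Set.Ico (0:ℝ) 1)
    (by rw [Real.volume_Ico]; exact ENNReal.ofReal_lt_top) hb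
  rw [measureReal_def, Real.volume_Ico] at this
  simp only [sub_zero, ENNReal.toReal_ofReal zero_le_one, mul_one] at this
  have hfinal : C ^ 2 = R ^ 2 * (D:ℝ) ^ (-(2*s)) := by
    rw [hC, mul_pow]
    congr 1
    rw [← Real.rpow_natCast ((D:ℝ) ^ (-s)) 2, ← Real.rpow_mul (le_of_lt hDr)]
    congr 1
    push_cast
    ring
  calc (∫ x in Set.Ico (0:ℝ) 1, (f x - projHaar D f x) ^ 2)
      ≤ ‖∫ x in Set.Ico (0:ℝ) 1, (f x - projHaar D f x) ^ 2‖ := le_abs_self _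
    _ ≤ C ^ 2 := this
    _ = R ^ 2 * (D:ℝ) ^ (-(2*s)) := hfinal
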